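/- If a permutation σ avoids the pattern 1324 and contains the pattern 3416725, then σ has an occurrence of 3416725 at positions j₁ < j₂ < … < j₇ in which the entries at positions j₁ and j₃ (playing the roles of the '3' and the '1') are left-to-right minima of σ, and the entries at positions j₅ and j₇ (playing the roles of the '7' and the '5') are right-to-left maxima of σ. -/
import Mathlib


/-- `π` contains the pattern `σ`: there is a strictly increasing choice of positions
on which `π` is order-isomorphic to `σ`. -/
def Contains {n k : ℕ} (π : Equiv.Perm (Fin n)) (σ : Equiv.Perm (Fin k)) : Prop :=
  ∃ f : Fin k → Fin n, StrictMono f ∧ ∀ a b : Fin k, σ a < σ b ↔ π (f a) < π (f b)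

/-- `π` avoids the pattern `σ`. -/
def Avoids {n k : ℕ} (π : Equiv.Perm (Fin n)) (σ : Equiv.Perm (Fin k)) : Prop :=
  ¬ Contains π σ

/-- `σ` has a left-to-right minimum at position `i`. -/
def LRMin {n : ℕ} (σ : Equiv.Perm (Fin n)) (i : Fin n) : Prop :=
  ∀ j : Fin n, j < i → σ i < σ j

/-- `σ` has a right-to-left maximum at position `i`. -/
def RLMax {n : ℕ} (σ : Equiv.Perm (Fin n)) (i : Fin n) : Prop :=
  ∀ j : Fin n, i < j → σ j < σ i

noncomputable def p1324 : Equiv.Perm (Fin 4) := Equiv.ofBijective ![0, 2, 1, 3] (by decide)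
noncomputable def p3416725 : Equiv.Perm (Fin 7) := Equiv.ofBijective ![2, 3, 0, 5, 6, 1, 4] (by decide)

/-- Build an occurrence of 1324 from four positions with the right value pattern. -/
lemma contains_1324_of {n : ℕ} (σ : Equiv.Perm (Fin n)) {a b c d : Fin n}
    (hab : a < b) (hbc : b < c) (hcd : c < d)
    (h1 : σ a < σ c) (h2 : σ c < σ b) (h3 : σ b < σ d) : Contains σ p1324 := by
  refine ⟨![a, b, c, d], ?_, ?_⟩
  · rw [Fin.strictMono_iff_lt_succ]
    intro i
    fin_cases i <;> simpa using (by assumption : _)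
  · have h13 : σ a < σ b := lt_trans h1 h2
    have h14 : σ a < σ d := lt_trans h13 h3
    have h24 : σ c < σ d := lt_trans h2 h3
    intro i j
    fin_cases i <;> fin_cases j <;>
      simp only [p1324, Equiv.ofBijective, Equiv.coe_fn_mk, Matrix.cons_val_zero,
        Matrix.cons_val_one, Matrix.head_cons, Matrix.cons_val_two, Matrix.tail_cons,
        Matrix.cons_val_three, Fin.isValue] <;>
      simp <;>
      first
        | assumption
        | exact le_of_lt h1 | exact le_of_lt h2 | exact le_of_lt h3
        | exact le_of_lt h13 | exact le_of_lt h14 | exact le_of_lt h24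

theorem occurrence_3416725_with_extreme_entries
    (n : ℕ) (σ : Equiv.Perm (Fin n))
    (havoid : Avoids σ p1324) (hcont : Contains σ p3416725) :
    ∃ j : Fin 7 → Fin n, StrictMono j ∧
      σ (j 2) < σ (j 5) ∧ σ (j 5) < σ (j 0) ∧ σ (j 0) < σ (j 1) ∧
      σ (j 1) < σ (j 6) ∧ σ (j 6) < σ (j 3) ∧ σ (j 3) < σ (j 4) ∧
      LRMin σ (j 0) ∧ LRMin σ (j 2) ∧ RLMax σ (j 4) ∧ RLMax σ (j 6) := by
  obtain ⟨f, hf, hiff⟩ := hcont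
  -- position order facts
  have p01 : f 0 < f 1 := hf (by decide)
  have p12 : f 1 < f 2 := hf (by decide)
  have p23 : f 2 < f 3 := hf (by decide)
  have p34 : f 3 < f 4 := hf (by decide)
  have p45 : f 4 < f 5 := hf (by decide)
  have p56 : f 5 < f 6 := hf (by decide)
  -- value chain: σ(f2) < σ(f5) < σ(f0) < σ(f1) < σ(f6) < σ(f3) < σ(f4)
  have c25 : σ (f 2) < σ (f 5) := (hiff 2 5).mp
    (by simp only [p3416725, Equiv.ofBijective, Equiv.coe_fn_mk]; decide)
  have c50 : σ (f 5) < σ (f 0) := (hiff 5 0).mp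
    (by simp only [p3416725, Equiv.ofBijective, Equiv.coe_fn_mk]; decide)
  have c01 : σ (f 0) < σ (f 1) := (hiff 0 1).mp
    (by simp only [p3416725, Equiv.ofBijective, Equiv.coe_fn_mk]; decide)
  have c16 : σ (f 1) < σ (f 6) := (hiff 1 6).mp
    (by simp only [p3416725, Equiv.ofBijective, Equiv.coe_fn_mk]; decide)
  have c63 : σ (f 6) < σ (f 3) := (hiff 6 3).mp
    (by simp only [p3416725, Equiv.ofBijective, Equiv.coe_fn_mk]; decide)
  have c34 : σ (f 3) < σ (f 4) := (hiff 3 4).mp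
    (by simp only [p3416725, Equiv.ofBijective, Equiv.coe_fn_mk]; decide)
  have c53 : σ (f 5) < σ (f 3) := lt_trans (lt_trans c50 c01) (lt_trans c16 c63)
  -- L1 : any position left of f 1 carries a value above σ (f 5)
  have L1 : ∀ x : Fin n, x < f 1 → ¬ σ x < σ (f 5) := by
    intro x hx hlt
    exact havoid (contains_1324_of σ hx (lt_trans p12 (lt_trans p23 (lt_trans p34 p45)))
      p56 hlt (lt_trans c50 c01) c16)
  -- L2 : any position right of f 5 carries a value below σ (f 3)
  have L2 : ∀ y : Fin n, f 5 < y → ¬ σ (f 3) < σ y := by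
    intro y hy hlt
    exact havoid (contains_1324_of σ p23 (lt_trans p34 p45) hy c25 c53 hlt)
  -- the four replacement positions
  obtain ⟨a, hamem, hamin⟩ :=
    Finset.exists_min_image (Finset.Iic (f 0)) (fun x => σ x) ⟨f 0, by simp⟩
  obtain ⟨c, hcmem, hcmin⟩ :=
    Finset.exists_min_image (Finset.Ioc (f 1) (f 2)) (fun x => σ x)
      ⟨f 2, by simp [p12]⟩
  obtain ⟨e, hemem, hemax⟩ :=
    Finset.exists_max_image (Finset.Ico (f 4) (f 5)) (fun x => σ x)
      ⟨f 4, by simp [p45]⟩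
  obtain ⟨g, hgmem, hgmax⟩ :=
    Finset.exists_max_image (Finset.Ici (f 6)) (fun x => σ x) ⟨f 6, by simp⟩
  rw [Finset.mem_Iic] at hamem
  rw [Finset.mem_Ioc] at hcmem
  rw [Finset.mem_Ico] at hemem
  rw [Finset.mem_Ici] at hgmem
  have va : σ a ≤ σ (f 0) := hamin (f 0) (by simp)
  have vc : σ c ≤ σ (f 2) := hcmin (f 2) (by simp [p12])
  have ve : σ (f 4) ≤ σ e := hemax (f 4) (by simp [p45])
  have vg : σ (f 6) ≤ σ g := hgmax (f 6) (by simp)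
  -- key value facts for the replacements
  have hA : σ (f 5) < σ a := by
    rcases lt_trichotomy (σ (f 5)) (σ a) with h | h | h
    · exact h
    · exact absurd (σ.injective h.symm) (ne_of_lt (lt_of_le_of_lt hamem (lt_trans p01
        (lt_trans p12 (lt_trans p23 (lt_trans p34 p45))))))
    · exact absurd h (L1 a (lt_of_le_of_lt hamem p01))
  have hG : σ g < σ (f 3) := by
    rcases lt_trichotomy (σ g) (σ (f 3)) with h | h | h
    · exact h
    · exact absurd (σ.injective h) (ne_of_gt (lt_of_lt_of_le (lt_trans p34 (lt_trans p45 p56))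
        hgmem))
    · exact absurd h (L2 g (lt_of_lt_of_le p56 hgmem))
  have hC5 : σ c < σ (f 5) := lt_of_le_of_lt vc c25
  have hE3 : σ (f 3) < σ e := lt_of_lt_of_le c34 ve
  refine ⟨![a, f 1, c, f 3, e, f 5, g], ?_, hC5, hA, lt_of_le_of_lt va c01,
    lt_of_lt_of_le c16 vg, hG, hE3, ?_, ?_, ?_, ?_⟩
  · -- strict monotonicity of positions
    rw [Fin.strictMono_iff_lt_succ]
    intro i
    fin_cases i
    · exact lt_of_le_of_lt hamem p01
    · exact hcmem.1
    · exact lt_of_le_of_lt hcmem.2 p23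
    · exact lt_of_lt_of_le p34 hemem.1
    · exact hemem.2
    · exact lt_of_lt_of_le p56 hgmem
  · -- LRMin at a
    intro x hx
    show σ a < σ x
    have hle : σ a ≤ σ x := hamin x (Finset.mem_Iic.mpr (le_of_lt (lt_of_lt_of_le hx hamem)))
    exact lt_of_le_of_ne hle (fun h => (ne_of_lt hx) (σ.injective h.symm))
  · -- LRMin at c
    intro x hx
    show σ c < σ x
    rcases lt_trichotomy x (f 1) with h1 | h1 | h1
    · exact lt_of_lt_of_le (lt_of_lt_of_le hC5 (le_of_not_gt (L1 x h1))) le_rfl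
    · subst h1
      exact lt_trans hC5 (lt_trans c50 c01)
    · have hle : σ c ≤ σ x :=
        hcmin x (Finset.mem_Ioc.mpr ⟨h1, le_of_lt (lt_of_lt_of_le hx hcmem.2)⟩)
      exact lt_of_le_of_ne hle (fun h => (ne_of_lt hx) (σ.injective h.symm))
  · -- RLMax at e
    intro y hy
    show σ y < σ e
    rcases lt_trichotomy y (f 5) with h1 | h1 | h1
    · have hle : σ y ≤ σ e :=
        hemax y (Finset.mem_Ico.mpr ⟨le_of_lt (lt_of_le_of_lt hemem.1 hy), h1⟩)
      exact lt_of_le_of_ne hle (fun h => (ne_of_gt hy) (σ.injective h))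
    · subst h1
      exact lt_trans (lt_trans c50 (lt_trans c01 (lt_trans c16 c63))) hE3
    · exact lt_of_le_of_lt (le_of_not_gt (L2 y h1)) hE3
  · -- RLMax at g
    intro y hy
    show σ y < σ g
    have hle : σ y ≤ σ g := hgmax y (Finset.mem_Ici.mpr (le_of_lt (lt_of_le_of_lt hgmem hy)))
    exact lt_of_le_of_ne hle (fun h => (ne_of_gt hy) (σ.injective h))
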